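/- Let G be a finitely generated group. Suppose the derived subgroup G' is locally finite and the subgroup Δ̃(G) = ⟨[g,h^φ][h,g^φ] : g,h ∈ G⟩ of ν(G) is periodic (every element has finite order). Then G is finite. -/

import Mathlib

open Monoid
open scoped commutatorElement

/-- A pair of compatible (right) actions of groups `G` and `H` on each other,
in the sense of Brown–Loday.  `aGH g h` denotes `g ^ h` and `aHG h g` denotes `h ^ g`. -/
structure CompatibleActions (G H : Type*) [Group G] [Group H] where
  aGH : G → H → G
  aHG : H → G → H
  aGH_one : ∀ g, aGH g 1 = g
  aGH_mul : ∀ g h₁ h₂, aGH g (h₁ * h₂) = aGH (aGH g h₁) h₂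
  aGH_hom : ∀ g₁ g₂ h, aGH (g₁ * g₂) h = aGH g₁ h * aGH g₂ h
  aHG_one : ∀ h, aHG h 1 = h
  aHG_mul : ∀ h g₁ g₂, aHG h (g₁ * g₂) = aHG (aHG h g₁) g₂
  aHG_hom : ∀ h₁ h₂ g, aHG (h₁ * h₂) g = aHG h₁ g * aHG h₂ g
  compat₁ : ∀ g g₁ h, aGH g (aHG h g₁) = g₁⁻¹ * aGH (g₁ * g * g₁⁻¹) h * g₁
  compat₂ : ∀ h h₁ g, aHG h (aGH g h₁) = h₁⁻¹ * aHG (h₁ * h * h₁⁻¹) g * h₁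

variable {G H : Type*} [Group G] [Group H]

/-- Relators of the group `η(G,H)`:
`[g,h^φ]^{g₁} = [g^{g₁}, (h^{g₁})^φ]` and `[g,h^φ]^{h₁^φ} = [g^{h₁}, (h^{h₁})^φ]`. -/
def etaRels (c : CompatibleActions G H) : Set (Coprod G H) :=
  let iG : G →* Coprod G H := Coprod.inl
  let iH : H →* Coprod G H := Coprod.inr
  (Set.range fun p : G × G × H =>
    ((iG p.1)⁻¹ * ⁅iG p.2.1, iH p.2.2⁆ * iG p.1) *
      ⁅iG (p.1⁻¹ * p.2.1 * p.1), iH (c.aHG p.2.2 p.1)⁆⁻¹) ∪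
  (Set.range fun p : H × G × H =>
    ((iH p.1)⁻¹ * ⁅iG p.2.1, iH p.2.2⁆ * iH p.1) *
      ⁅iG (c.aGH p.2.1 p.1), iH (p.1⁻¹ * p.2.2 * p.1)⁆⁻¹)

/-- The Brown–Loday group `η(G,H)`. -/
def EtaGroup (c : CompatibleActions G H) : Type _ :=
  Coprod G H ⧸ Subgroup.normalClosure (etaRels c)

instance (c : CompatibleActions G H) : Group (EtaGroup c) :=
  QuotientGroup.Quotient.group _

/-- The canonical map `G → η(G,H)`. -/
def etaG (c : CompatibleActions G H) : G →* EtaGroup c :=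
  (QuotientGroup.mk' _).comp Coprod.inl

/-- The canonical map `H → η(G,H)`, `h ↦ h^φ`. -/
def etaH (c : CompatibleActions G H) : H →* EtaGroup c :=
  (QuotientGroup.mk' _).comp Coprod.inr

/-- The set of tensors `T⊗(G,H) = {[g, h^φ]} ⊆ η(G,H)`. -/
def tensorSet (c : CompatibleActions G H) : Set (EtaGroup c) :=
  {x | ∃ g h, x = ⁅etaG c g, etaH c h⁆}

/-- The non-abelian tensor product `[G, H^φ] ≤ η(G,H)`. -/
def tensorSub (c : CompatibleActions G H) : Subgroup (EtaGroup c) :=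
  Subgroup.closure (tensorSet c)

/-- The compatible pair of conjugation actions of `G` on itself, giving `ν(G) = η(G,G)`. -/
def conjActions (G : Type*) [Group G] : CompatibleActions G G where
  aGH g h := h⁻¹ * g * h
  aHG h g := g⁻¹ * h * g
  aGH_one := by intro g; group
  aGH_mul := by intros; group
  aGH_hom := by intros; group
  aHG_one := by intro h; group
  aHG_mul := by intros; group
  aHG_hom := by intros; group
  compat₁ := by intros; group
  compat₂ := by intros; group

/-- `ν(G)`. -/
abbrev NuGroup (G : Type*) [Group G] := EtaGroup (conjActions G)

/-- A group is locally finite if all its finitely generated subgroups are finite. -/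
def IsLocallyFiniteGroup (K : Type*) [Group K] : Prop :=
  ∀ S : Subgroup K, S.FG → Finite S

/-- The subgroup `Δ̃(K) = ⟨[g,h^φ][h,g^φ] : g, h ∈ K⟩ ≤ ν(K)`. -/
def deltaTilde (K : Type*) [Group K] : Subgroup (NuGroup K) :=
  Subgroup.closure {x | ∃ g h, x = ⁅etaG (conjActions K) g, etaH (conjActions K) h⁆ *
    ⁅etaG (conjActions K) h, etaH (conjActions K) g⁆}

/-- If `G` is finitely generated, `G'` is locally finite and `Δ̃(G)` is periodic,
then `G` is finite. -/

@[ext] structure Heis where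
  a : ℤ
  b : ℤ
  c : ℤ

namespace Heis

def hmul (x y : Heis) : Heis := ⟨x.a + y.a, x.b + y.b, x.c + y.c + x.a * y.b⟩
def hinv (x : Heis) : Heis := ⟨-x.a, -x.b, -x.c + x.a * x.b⟩

instance : Group Heis where
  mul := hmul
  one := ⟨0, 0, 0⟩
  inv := hinv
  mul_assoc x y z := by show hmul (hmul x y) z = hmul x (hmul y z); ext <;> simp [hmul] <;> ring
  one_mul x := by show hmul ⟨0,0,0⟩ x = x; ext <;> simp [hmul]
  mul_one x := by show hmul x ⟨0,0,0⟩ = x; ext <;> simp [hmul]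
  inv_mul_cancel x := by show hmul (hinv x) x = ⟨0,0,0⟩; ext <;> simp [hmul, hinv] <;> ring

@[simp] theorem mul_def (x y : Heis) :
    x * y = ⟨x.a + y.a, x.b + y.b, x.c + y.c + x.a * y.b⟩ := rfl
@[simp] theorem one_def : (1 : Heis) = ⟨0, 0, 0⟩ := rfl
@[simp] theorem inv_def (x : Heis) : x⁻¹ = ⟨-x.a, -x.b, -x.c + x.a * x.b⟩ := rfl

theorem pow_central (s : ℤ) (n : ℕ) : (⟨0, 0, s⟩ : Heis) ^ n = ⟨0, 0, n * s⟩ := by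
  induction n with
  | zero => simp
  | succ n ih => rw [pow_succ, ih]; ext <;> simp <;> ring

end Heis

section Key
variable {G : Type*} [Group G]

/-- `G → Heis`, `g ↦ (f g, 0, 0)`. -/
def phiL (f : G →* Multiplicative ℤ) : G →* Heis where
  toFun g := ⟨(f g).toAdd, 0, 0⟩
  map_one' := by ext <;> simp
  map_mul' g h := by ext <;> simp <;> ring

/-- `G → Heis`, `h ↦ (0, f h, 0)`. -/
def phiR (f : G →* Multiplicative ℤ) : G →* Heis where
  toFun g := ⟨0, (f g).toAdd, 0⟩
  map_one' := by ext <;> simp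
  map_mul' g h := by ext <;> simp <;> ring

def Phi (f : G →* Multiplicative ℤ) : Coprod G G →* Heis :=
  Coprod.lift (phiL f) (phiR f)

theorem Phi_rels (f : G →* Multiplicative ℤ) :
    ∀ r ∈ etaRels (conjActions G), Phi f r = 1 := by
  intro r hr
  simp only [etaRels, Set.mem_union, Set.mem_range] at hr
  obtain ⟨⟨g₁, g, h⟩, rfl⟩ | ⟨⟨h₁, g, h⟩, rfl⟩ := hr <;>
    simp only [Phi, conjActions, map_mul, map_inv, map_commutatorElement,
      commutatorElement_def, Coprod.lift_apply_inl, Coprod.lift_apply_inr] <;>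
    ext <;> simp [phiL, phiR] <;> ring

def Psi (f : G →* Multiplicative ℤ) : NuGroup G →* Heis :=
  QuotientGroup.lift _ (Phi f) fun r hr =>
    Subgroup.normalClosure_le_normal
      (fun x hx => MonoidHom.mem_ker.mpr (Phi_rels f x hx)) hr

theorem Psi_etaG (f : G →* Multiplicative ℤ) (g : G) :
    Psi f (etaG (conjActions G) g) = phiL f g := rfl

theorem Psi_etaH (f : G →* Multiplicative ℤ) (g : G) :
    Psi f (etaH (conjActions G) g) = phiR f g := rfl

theorem key (h2 : ∀ x ∈ deltaTilde G, IsOfFinOrder x)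
    (f : G →* Multiplicative ℤ) (g : G) : f g = 1 := by
  have hx : ⁅etaG (conjActions G) g, etaH (conjActions G) g⁆ * ⁅etaG (conjActions G) g, etaH (conjActions G) g⁆ ∈ deltaTilde G :=
    Subgroup.subset_closure ⟨g, g, rfl⟩
  have hfin : IsOfFinOrder (Psi f (⁅etaG (conjActions G) g, etaH (conjActions G) g⁆ * ⁅etaG (conjActions G) g, etaH (conjActions G) g⁆)) :=
    MonoidHom.isOfFinOrder _ (h2 _ hx)
  set t : ℤ := (f g).toAdd with ht
  have hval : Psi f (⁅etaG (conjActions G) g, etaH (conjActions G) g⁆ * ⁅etaG (conjActions G) g, etaH (conjActions G) g⁆) = ⟨0, 0, 2 * (t * t)⟩ := by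
    rw [map_mul, map_commutatorElement, Psi_etaG, Psi_etaH]
    ext <;> simp [phiL, phiR, commutatorElement_def] <;> ring
  rw [hval] at hfin
  obtain ⟨n, hn, hpow⟩ := isOfFinOrder_iff_pow_eq_one.mp hfin
  rw [Heis.pow_central] at hpow
  have : (n : ℤ) * (2 * (t * t)) = 0 := by
    have := congrArg Heis.c hpow; simpa using this
  have ht0 : t = 0 := by
    rcases mul_eq_zero.mp this with h | h
    · exact absurd (by exact_mod_cast h) (by omega : (n:ℤ) ≠ 0)
    · rcases mul_eq_zero.mp h with h | h
      · omega
      · rcases mul_eq_zero.mp h with h | h <;> exact h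
  have : (f g).toAdd = 0 := ht0
  exact toAdd_eq_zero.mp this
end Key


/-- If `G` is finitely generated, `G'` is locally finite and `Δ̃(G)` is periodic,
then `G` is finite. -/
theorem finite_of_deltaTilde_periodic {G : Type*} [Group G] [Group.FG G]
    (h1 : IsLocallyFiniteGroup (commutator G))
    (h2 : ∀ x ∈ deltaTilde G, IsOfFinOrder x) : Finite G := by
  classical
  have hsurj : Function.Surjective (Abelianization.of : G →* Abelianization G) := fun x =>
    QuotientGroup.induction_on x fun g => ⟨g, rfl⟩
  haveI hfgA : Group.FG (Abelianization G) := Group.fg_of_surjective hsurj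
  -- Step 1: the abelianization is a torsion group.
  have htor : Monoid.IsTorsion (Abelianization G) := by
    intro x
    by_contra hna
    haveI : Module.Finite ℤ (Additive (Abelianization G)) :=
      Module.Finite.iff_addGroup_fg.mpr inferInstance
    set M := Additive (Abelianization G)
    set T := Submodule.torsion ℤ M with hT
    haveI : Module.Free ℤ (M ⧸ T) := Module.free_of_finite_type_torsion_free'
    set a : M := Additive.ofMul x with ha
    have hmk : T.mkQ a ≠ 0 := by
      intro h0
      have hmem : a ∈ T := by
        simpa [Submodule.mkQ_apply, Submodule.Quotient.mk_eq_zero] using h0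
      rw [Submodule.mem_torsion_iff] at hmem
      obtain ⟨n, hn⟩ := hmem
      have hne : (n : ℤ) ≠ 0 := nonZeroDivisors.coe_ne_zero n
      apply hna
      rw [← isOfFinAddOrder_ofMul_iff]
      rw [isOfFinAddOrder_iff_nsmul_eq_zero]
      refine ⟨(n : ℤ).natAbs, Int.natAbs_pos.mpr hne, ?_⟩
      have : ((n : ℤ).natAbs : ℤ) • a = 0 ∨ (-((n : ℤ).natAbs : ℤ)) • a = 0 := by
        rcases Int.natAbs_eq (n : ℤ) with h | h
        · left; rw [← h]; exact hn
        · right; rw [← h]; exact hn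
      rcases this with h | h
      · simpa [natCast_zsmul] using h
      · rw [neg_zsmul, neg_eq_zero] at h
        simpa [natCast_zsmul] using h
    -- pick a coordinate functional that does not vanish on `mkQ a`
    set b := Module.Free.chooseBasis ℤ (M ⧸ T)
    have hco : ∃ i, b.coord i (T.mkQ a) ≠ 0 := by
      by_contra hc
      push_neg at hc
      apply hmk
      apply b.ext_elem
      intro i
      simpa [Module.Basis.coord_apply] using hc i
    obtain ⟨i, hi⟩ := hco
    set fl : M →ₗ[ℤ] ℤ := (b.coord i).comp T.mkQ with hfl
    -- turn it into a multiplicative homomorphism G →* Multiplicative ℤ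
    set F : G →* Multiplicative ℤ :=
      { toFun := fun g => Multiplicative.ofAdd (fl (Additive.ofMul (Abelianization.of g)))
        map_one' := by simp
        map_mul' := fun g g' => by
          rw [← ofAdd_add]
          congr 1
          rw [← map_add]
          congr 1 } with hF
    obtain ⟨g, hg⟩ := hsurj x
    have hFg : F g = 1 := key h2 F g
    have : fl a = 0 := by
      have := congrArg Multiplicative.toAdd hFg
      simpa [hF, hg, ha] using this
    exact hi (by simpa [hfl] using this)
  -- Step 2: the abelianization is finite.
  have hfinA : Finite (Abelianization G) := CommGroup.finite_of_fg_torsion _ htor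
  have hfinQ : Finite (G ⧸ commutator G) := hfinA
  haveI : (commutator G).FiniteIndex := Subgroup.finiteIndex_of_finite_quotient
  -- Step 3: the derived subgroup is finitely generated (Schreier), hence finite.
  haveI hfgC : Group.FG ↥(commutator G) := Subgroup.fg_of_index_ne_zero _
  have hfinC : Finite ↥(commutator G) := by
    have htop : Finite ↥(⊤ : Subgroup ↥(commutator G)) := h1 ⊤ hfgC.out
    exact Finite.of_equiv _ Subgroup.topEquiv.toEquiv
  -- Step 4: conclude.
  exact Finite.of_equiv _ (Subgroup.groupEquivQuotientProdSubgroup (s := commutator G)).symm
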